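/- Let M ≥ n + d, C ∈ ℝ^{M×n}, D ∈ ℝ^{M×d}, and let [C, D] = UΣVᵀ be a singular value decomposition with singular values σ₁ ≥ … ≥ σ_{n+d} > 0 satisfying σ_n > σ_{n+1}, and with V₂₂ ∈ ℝ^{d×d} (the lower-right d×d block of V) invertible. Then the minimum of ‖[Ẽ, G̃]‖_F over all (X, Ẽ, G̃) satisfying (C + Ẽ)X = D + G̃ equals (σ_{n+1}² + σ_{n+2}² + … + σ_{n+d}²)^{1/2}. -/

import Mathlib

open Matrix

/-- The Frobenius norm of a real matrix. -/
noncomputable def frob {α β : Type*} [Fintype α] [Fintype β] (M : Matrix α β ℝ) : ℝ :=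
  Real.sqrt (∑ i, ∑ j, M i j ^ 2)

/-- `X` is a real TLS solution for data `C, D`: there exist perturbations `Ẽ, G̃` with
`(C + Ẽ) X = D + G̃` attaining the minimum of `‖[Ẽ, G̃]‖_F` among all feasible triples
`(X', Ẽ', G̃')`. -/
def IsTLSSol {M n d : ℕ}
    (C : Matrix (Fin M) (Fin n) ℝ) (D : Matrix (Fin M) (Fin d) ℝ)
    (X : Matrix (Fin n) (Fin d) ℝ) : Prop :=
  ∃ (E : Matrix (Fin M) (Fin n) ℝ) (G : Matrix (Fin M) (Fin d) ℝ),
    (C + E) * X = D + G ∧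
    ∀ (E' : Matrix (Fin M) (Fin n) ℝ) (G' : Matrix (Fin M) (Fin d) ℝ)
      (X' : Matrix (Fin n) (Fin d) ℝ),
      (C + E') * X' = D + G' → frob (fromCols E G) ≤ frob (fromCols E' G')


open Matrix

noncomputable def frobSq {α β : Type*} [Fintype α] [Fintype β] (A : Matrix α β ℝ) : ℝ :=
  ∑ i, ∑ j, A i j ^ 2

lemma frobSq_nonneg {α β : Type*} [Fintype α] [Fintype β] (A : Matrix α β ℝ) :
    0 ≤ frobSq A :=
  Finset.sum_nonneg fun _ _ => Finset.sum_nonneg fun _ _ => sq_nonneg _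

lemma frobSq_eq_trace {α β : Type*} [Fintype α] [Fintype β] (A : Matrix α β ℝ) :
    frobSq A = Matrix.trace (Aᵀ * A) := by
  simp only [frobSq, Matrix.trace, Matrix.diag_apply, Matrix.mul_apply,
    Matrix.transpose_apply, sq]
  exact Finset.sum_comm

lemma frobSq_neg {α β : Type*} [Fintype α] [Fintype β] (A : Matrix α β ℝ) :
    frobSq (-A) = frobSq A := by
  simp [frobSq]

lemma frobSq_orth_left {m α : Type*} [Fintype m] [Fintype α] [DecidableEq m]
    (U : Matrix m m ℝ) (hU : Uᵀ * U = 1) (A : Matrix m α ℝ) :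
    frobSq (U * A) = frobSq A := by
  rw [frobSq_eq_trace, frobSq_eq_trace, transpose_mul, Matrix.mul_assoc,
    ← Matrix.mul_assoc Uᵀ U A, hU, Matrix.one_mul]

lemma frobSq_orth_right {α k : Type*} [Fintype α] [Fintype k] [DecidableEq k]
    (V : Matrix k k ℝ) (hV : Vᵀ * V = 1) (A : Matrix α k ℝ) :
    frobSq (A * Vᵀ) = frobSq A := by
  rw [frobSq_eq_trace, frobSq_eq_trace, transpose_mul, transpose_transpose,
    Matrix.mul_assoc, Matrix.trace_mul_comm, Matrix.mul_assoc, Matrix.mul_assoc,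
    Matrix.trace_mul_comm, ← Matrix.mul_assoc, Matrix.trace_mul_comm, Matrix.mul_assoc, hV,
    Matrix.mul_one]

lemma trace_proj {α k : Type*} [Fintype α] [Fintype k] [DecidableEq k]
    (Δ : Matrix α k ℝ) (P : Matrix k k ℝ) (hsym : Pᵀ = P) (hidem : P * P = P) :
    frobSq (Δ * P) = Matrix.trace (Δᵀ * Δ * P) := by
  rw [frobSq_eq_trace, transpose_mul, hsym, Matrix.mul_assoc, Matrix.trace_mul_comm]
  simp only [Matrix.mul_assoc]
  rw [hidem]

lemma frobSq_mul_proj_le {α k : Type*} [Fintype α] [Fintype k] [DecidableEq k]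
    (Δ : Matrix α k ℝ) (P : Matrix k k ℝ) (hsym : Pᵀ = P) (hidem : P * P = P) :
    frobSq (Δ * P) ≤ frobSq Δ := by
  have h1 : frobSq (Δ * P) = Matrix.trace (Δᵀ * Δ * P) := trace_proj Δ P hsym hidem
  have hQsym : (1 - P)ᵀ = 1 - P := by rw [transpose_sub, transpose_one, hsym]
  have hQidem : (1 - P) * (1 - P) = 1 - P := by
    rw [mul_sub, sub_mul, sub_mul, one_mul, mul_one, hidem, one_mul]; abel
  have h2 : frobSq (Δ * (1 - P)) = Matrix.trace (Δᵀ * Δ) - Matrix.trace (Δᵀ * Δ * P) := by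
    rw [trace_proj Δ (1 - P) hQsym hQidem, mul_sub, Matrix.mul_one, trace_sub]
  have h3 := frobSq_nonneg (Δ * (1 - P))
  have h4 : frobSq Δ = Matrix.trace (Δᵀ * Δ) := frobSq_eq_trace Δ
  linarith
open Finset

lemma kyfan {n d : ℕ} (hd : 0 < d) (σ : Fin (n + d) → ℝ)
    (hσpos : ∀ i, 0 < σ i) (hσdec : Antitone σ)
    (c : Fin (n + d) → ℝ) (hc0 : ∀ i, 0 ≤ c i) (hc1 : ∀ i, c i ≤ 1)
    (hsum : ∑ i, c i = (d : ℝ)) :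
    ∑ i ∈ Finset.univ.filter (fun i : Fin (n + d) => n ≤ (i : ℕ)), σ i ^ 2 ≤
      ∑ i, σ i ^ 2 * c i := by
  have hnlt : n < n + d := by omega
  set T := Finset.univ.filter (fun i : Fin (n + d) => n ≤ (i : ℕ)) with hTdef
  set H := Finset.univ.filter (fun i : Fin (n + d) => ¬ n ≤ (i : ℕ)) with hHdef
  set τ : ℝ := σ ⟨n, hnlt⟩ ^ 2 with hτdef
  have hcard : T.card = d := by
    have : T = Finset.Ici (⟨n, hnlt⟩ : Fin (n + d)) := by
      ext i; simp [hTdef, Fin.le_def]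
    rw [this, Fin.card_Ici]; simp
  have hτle : ∀ i ∈ T, σ i ^ 2 ≤ τ := by
    intro i hi
    have hni : n ≤ (i : ℕ) := by simpa [hTdef] using hi
    have : σ i ≤ σ ⟨n, hnlt⟩ := hσdec (by simpa [Fin.le_def] using hni)
    exact pow_le_pow_left₀ (hσpos i).le this 2
  have hτge : ∀ i ∈ H, τ ≤ σ i ^ 2 := by
    intro i hi
    have hni : (i : ℕ) ≤ n := by
      have : ¬ n ≤ (i : ℕ) := by simpa [hHdef] using hi
      omega
    have : σ ⟨n, hnlt⟩ ≤ σ i := hσdec (by simpa [Fin.le_def] using hni)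
    exact pow_le_pow_left₀ (hσpos _).le this 2
  have h1 : ∑ i ∈ T, σ i ^ 2 ≤ ∑ i ∈ T, (σ i ^ 2 * c i + τ * (1 - c i)) := by
    apply Finset.sum_le_sum
    intro i hi
    nlinarith [hτle i hi, hc0 i, hc1 i]
  have h2 : ∑ i ∈ T, (σ i ^ 2 * c i + τ * (1 - c i)) =
      ∑ i ∈ T, σ i ^ 2 * c i + τ * ((d : ℝ) - ∑ i ∈ T, c i) := by
    rw [Finset.sum_add_distrib, ← Finset.mul_sum, Finset.sum_sub_distrib,
      Finset.sum_const, hcard]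
    simp [mul_sub]
  have h3 : ∑ i ∈ H, τ * c i ≤ ∑ i ∈ H, σ i ^ 2 * c i := by
    apply Finset.sum_le_sum
    intro i hi
    exact mul_le_mul_of_nonneg_right (hτge i hi) (hc0 i)
  have h4 : ∑ i ∈ T, c i + ∑ i ∈ H, c i = (d : ℝ) := by
    rw [hTdef, hHdef, Finset.sum_filter_add_sum_filter_not]; exact hsum
  have h5 : ∑ i ∈ T, σ i ^ 2 * c i + ∑ i ∈ H, σ i ^ 2 * c i = ∑ i, σ i ^ 2 * c i := by
    rw [hTdef, hHdef, Finset.sum_filter_add_sum_filter_not]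
  have h6 : τ * ∑ i ∈ H, c i = ∑ i ∈ H, τ * c i := Finset.mul_sum _ _ _
  have h7 : τ * ((d : ℝ) - ∑ i ∈ T, c i) = ∑ i ∈ H, τ * c i := by
    rw [← h4, ← h6]; ring
  linarith
-- appended to base
section lower
open Matrix

lemma sigma_diag {Mn n d : ℕ} (hM : n + d ≤ Mn) (σ : Fin (n + d) → ℝ) :
    (Matrix.of fun (i : Fin Mn) (j : Fin n ⊕ Fin d) =>
        if (i : ℕ) = ((finSumFinEquiv j : Fin (n + d)) : ℕ)
        then σ (finSumFinEquiv j) else 0)ᵀ *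
      (Matrix.of fun (i : Fin Mn) (j : Fin n ⊕ Fin d) =>
        if (i : ℕ) = ((finSumFinEquiv j : Fin (n + d)) : ℕ)
        then σ (finSumFinEquiv j) else 0) =
    Matrix.diagonal (fun j => σ (finSumFinEquiv j) ^ 2) := by
  have e : (Fin n ⊕ Fin d) → Fin Mn := fun j =>
    ⟨(finSumFinEquiv j : ℕ), lt_of_lt_of_le (finSumFinEquiv j).2 hM⟩
  ext j k
  rw [Matrix.mul_apply]
  have hcond : ∀ (i : Fin Mn) (j' : Fin n ⊕ Fin d),
      ((i : ℕ) = ((finSumFinEquiv j' : Fin (n + d)) : ℕ)) =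
        (i = (⟨(finSumFinEquiv j' : ℕ), lt_of_lt_of_le (finSumFinEquiv j').2 hM⟩ : Fin Mn)) :=
    fun i j' => propext ⟨fun h => Fin.ext h, fun h => congrArg Fin.val h⟩
  simp only [Matrix.transpose_apply, Matrix.of_apply, hcond]
  rw [Finset.sum_congr rfl (fun i _ => ite_mul _ _ _ _)]
  simp only [zero_mul]
  rw [Finset.sum_ite_eq' Finset.univ]
  simp only [Finset.mem_univ, if_true]
  by_cases hjk : j = k
  · subst hjk; simp [Matrix.diagonal_apply_eq, sq]
  · have : (⟨(finSumFinEquiv j : ℕ), lt_of_lt_of_le (finSumFinEquiv j).2 hM⟩ : Fin Mn) ≠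
        ⟨(finSumFinEquiv k : ℕ), lt_of_lt_of_le (finSumFinEquiv k).2 hM⟩ := by
      intro h
      have hv : (finSumFinEquiv j : ℕ) = (finSumFinEquiv k : ℕ) := congrArg (Fin.val : Fin Mn → ℕ) h
      exact hjk (finSumFinEquiv.injective (Fin.ext hv))
    rw [Matrix.diagonal_apply_ne _ hjk, if_neg this, mul_zero]
end lower
section lower2
open Matrix

lemma tls_lower {Mn n d : ℕ} (hd : 0 < d) (hM : n + d ≤ Mn)
    (U : Matrix (Fin Mn) (Fin Mn) ℝ) (hU : Uᵀ * U = 1)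
    (V : Matrix (Fin n ⊕ Fin d) (Fin n ⊕ Fin d) ℝ) (hV : Vᵀ * V = 1)
    (σ : Fin (n + d) → ℝ) (hσpos : ∀ i, 0 < σ i) (hσdec : Antitone σ)
    (A : Matrix (Fin Mn) (Fin n ⊕ Fin d) ℝ)
    (hA : A = U * (Matrix.of fun (i : Fin Mn) (j : Fin n ⊕ Fin d) =>
            if (i : ℕ) = ((finSumFinEquiv j : Fin (n + d)) : ℕ)
            then σ (finSumFinEquiv j) else 0) * Vᵀ)
    (Δ : Matrix (Fin Mn) (Fin n ⊕ Fin d) ℝ)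
    (X : Matrix (Fin n) (Fin d) ℝ)
    (hfeas : (A + Δ) * fromRows X (-1 : Matrix (Fin d) (Fin d) ℝ) = 0) :
    ∑ i ∈ Finset.univ.filter (fun i : Fin (n + d) => n ≤ (i : ℕ)), σ i ^ 2 ≤ frobSq Δ := by
  set Sg : Matrix (Fin Mn) (Fin n ⊕ Fin d) ℝ :=
    Matrix.of fun (i : Fin Mn) (j : Fin n ⊕ Fin d) =>
      if (i : ℕ) = ((finSumFinEquiv j : Fin (n + d)) : ℕ)
      then σ (finSumFinEquiv j) else 0 with hSg
  set W : Matrix (Fin n ⊕ Fin d) (Fin d) ℝ := fromRows X (-1 : Matrix (Fin d) (Fin d) ℝ) with hW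
  set Gm : Matrix (Fin d) (Fin d) ℝ := Wᵀ * W with hGm
  have hGW : Gm = Xᵀ * X + 1 := by
    rw [hGm, hW, transpose_fromRows, fromCols_mul_fromRows]
    simp
  have hGpd : Gm.PosDef := by
    rw [hGW]
    refine Matrix.PosDef.posSemidef_add ?_ Matrix.PosDef.one
    have := Matrix.posSemidef_conjTranspose_mul_self X
    rwa [conjTranspose_eq_transpose_of_trivial] at this
  have hGu : IsUnit Gm.det := hGpd.det_pos.ne'.isUnit
  have hGi1 : Gm⁻¹ * Gm = 1 := Matrix.nonsing_inv_mul _ hGu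
  have hG1i : Gm * Gm⁻¹ = 1 := Matrix.mul_nonsing_inv _ hGu
  have hGsym : Gmᵀ = Gm := by rw [hGm, transpose_mul, transpose_transpose]
  have hGisym : (Gm⁻¹)ᵀ = Gm⁻¹ := by rw [transpose_nonsing_inv, hGsym]
  set P : Matrix (Fin n ⊕ Fin d) (Fin n ⊕ Fin d) ℝ := W * Gm⁻¹ * Wᵀ with hP
  have hPsym : Pᵀ = P := by
    rw [hP]
    simp only [transpose_mul, transpose_transpose, hGisym, Matrix.mul_assoc]
  have hPidem : P * P = P := by
    rw [hP]
    simp only [Matrix.mul_assoc]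
    rw [← Matrix.mul_assoc Wᵀ W, ← hGm, ← Matrix.mul_assoc Gm⁻¹ Gm, hGi1, Matrix.one_mul]
  have htrP : Matrix.trace P = (d : ℝ) := by
    rw [hP, Matrix.mul_assoc, Matrix.trace_mul_comm, Matrix.mul_assoc, ← hGm,
      Matrix.trace_mul_comm, hG1i, Matrix.trace_one]
    simp
  have hVVt : V * Vᵀ = 1 := mul_eq_one_comm.mp hV
  set R : Matrix (Fin n ⊕ Fin d) (Fin n ⊕ Fin d) ℝ := Vᵀ * P * V with hR
  have hRsym : Rᵀ = R := by
    rw [hR]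
    simp only [transpose_mul, transpose_transpose, hPsym, Matrix.mul_assoc]
  have hRidem : R * R = R := by
    rw [hR]
    simp only [Matrix.mul_assoc]
    rw [← Matrix.mul_assoc V Vᵀ, hVVt, Matrix.one_mul, ← Matrix.mul_assoc P P, hPidem]
  have htrR : Matrix.trace R = (d : ℝ) := by
    rw [hR, Matrix.mul_assoc, Matrix.trace_mul_comm, Matrix.mul_assoc, hVVt,
      Matrix.mul_one, htrP]
  have hRdiag : ∀ j, 0 ≤ R j j ∧ R j j ≤ 1 := by
    intro j
    have hRjj : R j j = ∑ k, R j k ^ 2 := by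
      conv_lhs => rw [← hRidem]
      rw [Matrix.mul_apply]
      refine Finset.sum_congr rfl fun k _ => ?_
      have h' : R j k = R k j := congrFun (congrFun hRsym k) j
      rw [← h', sq]
    have h0 : 0 ≤ R j j := by
      rw [hRjj]; exact Finset.sum_nonneg fun _ _ => sq_nonneg _
    have hsq : R j j ^ 2 ≤ R j j := by
      conv_rhs => rw [hRjj]
      exact Finset.single_le_sum (f := fun k => R j k ^ 2)
        (fun _ _ => sq_nonneg _) (Finset.mem_univ j)
    exact ⟨h0, by nlinarith⟩
  -- A^T A = V diag Vᵀ
  have hAtA : Aᵀ * A = V * Matrix.diagonal (fun j => σ (finSumFinEquiv j) ^ 2) * Vᵀ := by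
    rw [hA]
    have h1 : (U * Sg * Vᵀ)ᵀ * (U * Sg * Vᵀ) = V * (Sgᵀ * ((Uᵀ * U) * (Sg * Vᵀ))) := by
      simp only [transpose_mul, transpose_transpose, Matrix.mul_assoc]
    rw [h1, hU, Matrix.one_mul, ← Matrix.mul_assoc Sgᵀ Sg Vᵀ, hSg]
    rw [sigma_diag hM σ]
    rw [Matrix.mul_assoc]
  -- Δ P = -(A P)
  have hΔW : Δ * W = -(A * W) := by
    have h := hfeas
    rw [Matrix.add_mul] at h
    exact eq_neg_of_add_eq_zero_right h
  have hΔP : Δ * P = -(A * P) := by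
    calc Δ * P = (Δ * W) * (Gm⁻¹ * Wᵀ) := by rw [hP]; simp only [Matrix.mul_assoc]
    _ = -(A * W) * (Gm⁻¹ * Wᵀ) := by rw [hΔW]
    _ = -(A * P) := by rw [hP]; simp only [Matrix.neg_mul, Matrix.mul_assoc]
  have key1 : frobSq (Δ * P) =
      Matrix.trace (Matrix.diagonal (fun j => σ (finSumFinEquiv j) ^ 2) * R) := by
    rw [hΔP, frobSq_neg, trace_proj A P hPsym hPidem, hAtA]
    simp only [Matrix.mul_assoc]
    rw [Matrix.trace_mul_comm]
    rw [Matrix.mul_assoc]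
  have key2 : Matrix.trace (Matrix.diagonal (fun j => σ (finSumFinEquiv j) ^ 2) * R) =
      ∑ j, σ (finSumFinEquiv j) ^ 2 * R j j := by
    simp [Matrix.trace, Matrix.diag, Matrix.diagonal_mul]
  set c : Fin (n + d) → ℝ := fun i => R (finSumFinEquiv.symm i) (finSumFinEquiv.symm i)
    with hc
  have hceq : ∀ j : Fin n ⊕ Fin d, c (finSumFinEquiv j) = R j j := by
    intro j; rw [hc]; simp
  have hsumc : ∑ i, c i = (d : ℝ) := by
    rw [← htrR]
    rw [← Equiv.sum_comp finSumFinEquiv c]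
    rw [Matrix.trace]
    exact Finset.sum_congr rfl fun j _ => hceq j
  have hmain : ∑ i, σ i ^ 2 * c i = ∑ j, σ (finSumFinEquiv j) ^ 2 * R j j := by
    rw [← Equiv.sum_comp finSumFinEquiv (fun i => σ i ^ 2 * c i)]
    exact Finset.sum_congr rfl fun j _ => by rw [hceq j]
  have hkf := kyfan hd σ hσpos hσdec c (fun i => (hRdiag _).1) (fun i => (hRdiag _).2) hsumc
  have hle := frobSq_mul_proj_le Δ P hPsym hPidem
  calc ∑ i ∈ Finset.univ.filter (fun i : Fin (n + d) => n ≤ (i : ℕ)), σ i ^ 2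
      ≤ ∑ i, σ i ^ 2 * c i := hkf
    _ = ∑ j, σ (finSumFinEquiv j) ^ 2 * R j j := hmain
    _ = frobSq (Δ * P) := by rw [key1, key2]
    _ ≤ frobSq Δ := hle
end lower2
section memb
open Matrix

lemma fromCols_add' {m n₁ n₂ : Type*} (A₁ B₁ : Matrix m n₁ ℝ) (A₂ B₂ : Matrix m n₂ ℝ) :
    fromCols (A₁ + B₁) (A₂ + B₂) = fromCols A₁ A₂ + fromCols B₁ B₂ := by
  ext i (j | j) <;> simp

lemma fromRows_neg' {m₁ m₂ n : Type*} (A₁ : Matrix m₁ n ℝ) (A₂ : Matrix m₂ n ℝ) :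
    fromRows (-A₁) (-A₂) = -(fromRows A₁ A₂) := by
  ext (i | i) j <;> simp

lemma fromBlocks_mul_fromRows' {n d k : ℕ}
    (A : Matrix (Fin n) (Fin n) ℝ) (B : Matrix (Fin n) (Fin d) ℝ)
    (C : Matrix (Fin d) (Fin n) ℝ) (D : Matrix (Fin d) (Fin d) ℝ)
    (P : Matrix (Fin n) (Fin k) ℝ) (Q : Matrix (Fin d) (Fin k) ℝ) :
    fromBlocks A B C D * fromRows P Q = fromRows (A * P + B * Q) (C * P + D * Q) := by
  ext (i | i) j <;>
    simp [fromBlocks, Matrix.mul_apply, Fintype.sum_sum_type]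

lemma frobSq_sigma2 {Mn n d : ℕ} (hM : n + d ≤ Mn) (σ : Fin (n + d) → ℝ) :
    frobSq (Matrix.of fun (i : Fin Mn) (j : Fin n ⊕ Fin d) =>
        if (i : ℕ) = ((finSumFinEquiv j : Fin (n + d)) : ℕ) ∧
            n ≤ ((finSumFinEquiv j : Fin (n + d)) : ℕ)
        then σ (finSumFinEquiv j) else 0) =
      ∑ i ∈ Finset.univ.filter (fun i : Fin (n + d) => n ≤ (i : ℕ)), σ i ^ 2 := by
  rw [frobSq, Finset.sum_comm]
  have hcond : ∀ (i : Fin Mn) (j' : Fin n ⊕ Fin d),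
      ((i : ℕ) = ((finSumFinEquiv j' : Fin (n + d)) : ℕ)) =
        (i = (⟨(finSumFinEquiv j' : ℕ), lt_of_lt_of_le (finSumFinEquiv j').2 hM⟩ : Fin Mn)) :=
    fun i j' => propext ⟨fun h => Fin.ext h, fun h => congrArg Fin.val h⟩
  have hj : ∀ j : Fin n ⊕ Fin d,
      (∑ i : Fin Mn, (Matrix.of fun (i : Fin Mn) (j : Fin n ⊕ Fin d) =>
        if (i : ℕ) = ((finSumFinEquiv j : Fin (n + d)) : ℕ) ∧
            n ≤ ((finSumFinEquiv j : Fin (n + d)) : ℕ)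
        then σ (finSumFinEquiv j) else 0) i j ^ 2) =
      if n ≤ ((finSumFinEquiv j : Fin (n + d)) : ℕ) then σ (finSumFinEquiv j) ^ 2 else 0 := by
    intro j
    by_cases htail : n ≤ ((finSumFinEquiv j : Fin (n + d)) : ℕ)
    · simp only [Matrix.of_apply, htail, and_true, if_true]
      simp only [hcond]
      rw [Finset.sum_congr rfl
        (fun i _ => by split_ifs <;> simp : ∀ i ∈ Finset.univ,
          (if i = (⟨(finSumFinEquiv j : ℕ), lt_of_lt_of_le (finSumFinEquiv j).2 hM⟩ : Fin Mn)
            then σ (finSumFinEquiv j) else 0) ^ 2 =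
          (if i = (⟨(finSumFinEquiv j : ℕ), lt_of_lt_of_le (finSumFinEquiv j).2 hM⟩ : Fin Mn)
            then σ (finSumFinEquiv j) ^ 2 else 0))]
      rw [Finset.sum_ite_eq' Finset.univ]
      simp
    · simp [htail]
  rw [Finset.sum_congr rfl (fun j _ => hj j)]
  rw [Equiv.sum_comp finSumFinEquiv
    (fun i : Fin (n + d) => if n ≤ (i : ℕ) then σ i ^ 2 else 0)]
  exact (Finset.sum_filter _ _).symm
end memb
/-- under the hypotheses of the TLS theorem, the minimum of
`‖[Ẽ, G̃]‖_F` over all `(X, Ẽ, G̃)` with `(C + Ẽ) X = D + G̃` equals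
`(σ_{n+1}² + … + σ_{n+d}²)^{1/2}`. -/
theorem tls_min_value {M n d : ℕ} (hn : 0 < n) (hd : 0 < d) (hM : n + d ≤ M)
    (C : Matrix (Fin M) (Fin n) ℝ) (D : Matrix (Fin M) (Fin d) ℝ)
    (U : Matrix (Fin M) (Fin M) ℝ) (hU : Uᵀ * U = 1)
    (V₁₁ : Matrix (Fin n) (Fin n) ℝ) (V₁₂ : Matrix (Fin n) (Fin d) ℝ)
    (V₂₁ : Matrix (Fin d) (Fin n) ℝ) (V₂₂ : Matrix (Fin d) (Fin d) ℝ)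
    (hV : (fromBlocks V₁₁ V₁₂ V₂₁ V₂₂)ᵀ * fromBlocks V₁₁ V₁₂ V₂₁ V₂₂ = 1)
    (σ : Fin (n + d) → ℝ) (hσpos : ∀ i, 0 < σ i) (hσdec : Antitone σ)
    (hSVD : fromCols C D =
      U * (Matrix.of fun (i : Fin M) (j : Fin n ⊕ Fin d) =>
            if (i : ℕ) = ((finSumFinEquiv j : Fin (n + d)) : ℕ)
            then σ (finSumFinEquiv j) else 0) *
        (fromBlocks V₁₁ V₁₂ V₂₁ V₂₂)ᵀ)
    (hgap : σ ⟨n, by omega⟩ < σ ⟨n - 1, by omega⟩)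
    (hV₂₂ : IsUnit V₂₂.det) :
    IsLeast
      {r : ℝ | ∃ (X : Matrix (Fin n) (Fin d) ℝ)
        (E : Matrix (Fin M) (Fin n) ℝ) (G : Matrix (Fin M) (Fin d) ℝ),
        (C + E) * X = D + G ∧ r = frob (fromCols E G)}
      (Real.sqrt (∑ i ∈ Finset.univ.filter (fun i : Fin (n + d) => n ≤ (i : ℕ)),
        σ i ^ 2)) := by
  set V : Matrix (Fin n ⊕ Fin d) (Fin n ⊕ Fin d) ℝ := fromBlocks V₁₁ V₁₂ V₂₁ V₂₂ with hVdef
  set Sg : Matrix (Fin M) (Fin n ⊕ Fin d) ℝ :=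
    Matrix.of fun (i : Fin M) (j : Fin n ⊕ Fin d) =>
      if (i : ℕ) = ((finSumFinEquiv j : Fin (n + d)) : ℕ)
      then σ (finSumFinEquiv j) else 0 with hSgdef
  set A : Matrix (Fin M) (Fin n ⊕ Fin d) ℝ := fromCols C D with hAdef
  set Sg2 : Matrix (Fin M) (Fin n ⊕ Fin d) ℝ :=
    Matrix.of fun (i : Fin M) (j : Fin n ⊕ Fin d) =>
      if (i : ℕ) = ((finSumFinEquiv j : Fin (n + d)) : ℕ) ∧
          n ≤ ((finSumFinEquiv j : Fin (n + d)) : ℕ)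
      then σ (finSumFinEquiv j) else 0 with hSg2def
  set Δ : Matrix (Fin M) (Fin n ⊕ Fin d) ℝ := -(U * Sg2 * Vᵀ) with hΔdef
  set X : Matrix (Fin n) (Fin d) ℝ := -(V₁₂ * V₂₂⁻¹) with hXdef
  -- the perturbed matrix annihilates [X; -1]
  have hW : fromRows X (-1 : Matrix (Fin d) (Fin d) ℝ) =
      -(V * fromRows (0 : Matrix (Fin n) (Fin d) ℝ) (1 : Matrix (Fin d) (Fin d) ℝ) * V₂₂⁻¹) := by
    rw [hVdef, fromBlocks_mul_fromRows', fromRows_mul]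
    simp only [Matrix.mul_zero, Matrix.mul_one, zero_add]
    rw [Matrix.mul_nonsing_inv _ hV₂₂, hXdef, ← fromRows_neg']
  have hzero : (Sg - Sg2) * fromRows (0 : Matrix (Fin n) (Fin d) ℝ)
      (1 : Matrix (Fin d) (Fin d) ℝ) = 0 := by
    ext i k
    rw [Matrix.mul_apply, Fintype.sum_sum_type]
    have h1 : ∀ j : Fin n, (Sg - Sg2) i (Sum.inl j) *
        fromRows (0 : Matrix (Fin n) (Fin d) ℝ) (1 : Matrix (Fin d) (Fin d) ℝ) (Sum.inl j) k
          = 0 := by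
      intro j; simp
    have h2 : ∀ j : Fin d, (Sg - Sg2) i (Sum.inr j) *
        fromRows (0 : Matrix (Fin n) (Fin d) ℝ) (1 : Matrix (Fin d) (Fin d) ℝ) (Sum.inr j) k
          = 0 := by
      intro j
      have htail : n ≤ ((finSumFinEquiv (Sum.inr j) : Fin (n + d)) : ℕ) := by
        simp [finSumFinEquiv_apply_right, Fin.natAdd]
      rw [hSgdef, hSg2def]
      by_cases hi : (i : ℕ) = n + (j : ℕ) <;>
        simp [Matrix.sub_apply, htail, hi]
    simp only [h1, h2, Finset.sum_const_zero, add_zero, Matrix.zero_apply]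
  have hAΔ : A + Δ = U * (Sg - Sg2) * Vᵀ := by
    rw [hΔdef, hSVD, Matrix.mul_sub, Matrix.sub_mul, sub_eq_add_neg]
  have hfeas : (A + Δ) * fromRows X (-1 : Matrix (Fin d) (Fin d) ℝ) = 0 := by
    rw [hAΔ, hW, Matrix.mul_neg]
    simp only [Matrix.mul_assoc]
    rw [← Matrix.mul_assoc Vᵀ V, hV, Matrix.one_mul,
      ← Matrix.mul_assoc (Sg - Sg2), hzero, Matrix.zero_mul, Matrix.mul_zero, neg_zero]
  have hfrobΔ : frobSq Δ = ∑ i ∈ Finset.univ.filter (fun i : Fin (n + d) => n ≤ (i : ℕ)),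
      σ i ^ 2 := by
    rw [hΔdef, frobSq_neg, Matrix.mul_assoc, frobSq_orth_left U hU,
      frobSq_orth_right V hV, hSg2def, frobSq_sigma2 hM σ]
  constructor
  · -- membership
    refine ⟨X, Δ.toCols₁, Δ.toCols₂, ?_, ?_⟩
    · have hfc : fromCols (C + Δ.toCols₁) (D + Δ.toCols₂) = A + Δ := by
        rw [fromCols_add', fromCols_toCols, hAdef]
      have h := hfeas
      rw [← hfc, fromCols_mul_fromRows] at h
      have hneg : (D + Δ.toCols₂) * (-1 : Matrix (Fin d) (Fin d) ℝ)
          = -(D + Δ.toCols₂) := by rw [Matrix.mul_neg, Matrix.mul_one]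
      rw [hneg] at h
      exact add_neg_eq_zero.mp h
    · rw [fromCols_toCols]
      show Real.sqrt _ = Real.sqrt (frobSq Δ)
      rw [hfrobΔ]
  · rintro r ⟨X', E', G', heq, rfl⟩
    have hfeas' : (A + fromCols E' G') * fromRows X' (-1 : Matrix (Fin d) (Fin d) ℝ)
        = 0 := by
      rw [hAdef, ← fromCols_add', fromCols_mul_fromRows, heq, Matrix.mul_neg,
        Matrix.mul_one, add_neg_cancel]
    have hlow := tls_lower hd hM U hU V hV σ hσpos hσdec A hSVD (fromCols E' G') X' hfeas'
    show Real.sqrt _ ≤ Real.sqrt (frobSq (fromCols E' G'))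
    exact Real.sqrt_le_sqrt hlow
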